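/- Let H be a separable complex Hilbert space, let a be a bounded, hermitian, elliptic sesquilinear form on H, let C : H → H be a compact linear operator, and let b(u,v) := a(u,v) + ⟨C u, v⟩ be well-posed. Let (X_ℓ)_{ℓ∈ℕ} be a nested sequence of finite-dimensional subspaces (X_ℓ ⊆ X_{ℓ+1}) such that dist(ψ, X_ℓ) → 0 as ℓ → ∞ for every ψ ∈ H. Let f be a bounded conjugate-linear functional on H and let φ ∈ H be the unique solution of b(φ,ψ) = f(ψ) for all ψ ∈ H. Then there exists ℓ• ∈ ℕ such that for every ℓ ≥ ℓ• the Galerkin solution Φ_ℓ ∈ X_ℓ (b(Φ_ℓ,Ψ) = f(Ψ) for all Ψ ∈ X_ℓ) exists and is unique, and ‖φ − Φ_ℓ‖ → 0 as ℓ → ∞. -/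

import Mathlib

open scoped InnerProductSpace ComplexConjugate

set_option maxHeartbeats 1000000 in
/-- Convergence of Galerkin approximations for the compactly
perturbed elliptic form `b(u,v) = a(u,v) + ⟨C u, v⟩` on a separable complex
Hilbert space: for a nested, asymptotically dense sequence of finite-dimensional
subspaces `X ℓ`, there is `ℓ•` such that for all `ℓ ≥ ℓ•` the Galerkin solution
`Φ_ℓ ∈ X ℓ` exists and is unique, and `‖φ − Φ_ℓ‖ → 0`. -/
theorem statement3
    {H : Type*} [NormedAddCommGroup H] [InnerProductSpace ℂ H] [CompleteSpace H]
    [TopologicalSpace.SeparableSpace H]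
    (a : H → H → ℂ)
    (ha_add₁ : ∀ u v w : H, a (u + v) w = a u w + a v w)
    (ha_smul₁ : ∀ (c : ℂ) (u v : H), a (c • u) v = c * a u v)
    (ha_add₂ : ∀ u v w : H, a u (v + w) = a u v + a u w)
    (ha_smul₂ : ∀ (c : ℂ) (u v : H), a u (c • v) = conj c * a u v)
    (M : ℝ) (hM : 0 < M) (ha_bdd : ∀ u v : H, ‖a u v‖ ≤ M * ‖u‖ * ‖v‖)
    (ha_herm : ∀ u v : H, a u v = conj (a v u))
    (α : ℝ) (hα : 0 < α) (ha_ell : ∀ u : H, α * ‖u‖ ^ 2 ≤ (a u u).re)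
    (C : H →L[ℂ] H) (hC : IsCompactOperator C)
    (b : H → H → ℂ) (hb : ∀ u v : H, b u v = a u v + ⟪v, C u⟫_ℂ)
    (hwp : ∀ φ : H, (∀ ψ : H, b φ ψ = 0) → φ = 0)
    (X : ℕ → Submodule ℂ H) (hXfin : ∀ ℓ, FiniteDimensional ℂ (X ℓ))
    (hXnest : ∀ ℓ, X ℓ ≤ X (ℓ + 1))
    (hdense : ∀ ψ : H,
      Filter.Tendsto (fun ℓ => Metric.infDist ψ (X ℓ : Set H)) Filter.atTop (nhds 0))
    (f : H → ℂ)
    (hf_add : ∀ x y : H, f (x + y) = f x + f y)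
    (hf_smul : ∀ (c : ℂ) (x : H), f (c • x) = conj c * f x)
    (hf_bdd : ∃ Cf : ℝ, ∀ x : H, ‖f x‖ ≤ Cf * ‖x‖)
    (φ : H) (hφ : ∀ ψ : H, b φ ψ = f ψ) :
    ∃ ℓs : ℕ,
      (∀ ℓ : ℕ, ℓs ≤ ℓ → ∃! Φ : H, Φ ∈ X ℓ ∧ ∀ Ψ ∈ X ℓ, b Φ Ψ = f Ψ) ∧
      (∀ Φ : ℕ → H,
        (∀ ℓ : ℕ, ℓs ≤ ℓ → Φ ℓ ∈ X ℓ ∧ ∀ Ψ ∈ X ℓ, b (Φ ℓ) Ψ = f Ψ) →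
        Filter.Tendsto (fun ℓ => ‖φ - Φ ℓ‖) Filter.atTop (nhds 0)) := by
  classical
  -- ## basic algebra of the form `a`
  have ha_zero₁ : ∀ v : H, a 0 v = 0 := by
    intro v
    have h := ha_add₁ 0 0 v
    simpa using h
  have ha_sub₁ : ∀ u v w : H, a (u - v) w = a u w - a v w := by
    intro u v w
    have : u - v = u + (-1 : ℂ) • v := by simp [sub_eq_add_neg]
    rw [this, ha_add₁, ha_smul₁]; ring
  have ha_sub₂ : ∀ u v w : H, a u (v - w) = a u v - a u w := by
    intro u v w
    have h1 : a u ((v - w) + w) = a u (v - w) + a u w := ha_add₂ u (v - w) w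
    rw [sub_add_cancel] at h1
    rw [h1]; ring
  have hdef : ∀ w : H, (a w w).re ≤ 0 → w = 0 := by
    intro w hw
    have h1 := ha_ell w
    have : ‖w‖ ^ 2 ≤ 0 := by nlinarith
    have : ‖w‖ = 0 := by nlinarith [norm_nonneg w]
    simpa using this
  -- ## the Riesz operator `A` of the form `a`
  set gfun : H → (H →L[ℂ] ℂ) := fun u =>
    LinearMap.mkContinuous
      { toFun := fun v => a v u
        map_add' := fun x y => ha_add₁ x y u
        map_smul' := fun c x => ha_smul₁ c x u } (M * ‖u‖)
      (fun v => by
        calc ‖a v u‖ ≤ M * ‖v‖ * ‖u‖ := ha_bdd v u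
        _ = M * ‖u‖ * ‖v‖ := by ring) with hgfun
  set Amap : H → H := fun u => (InnerProductSpace.toDual ℂ H).symm (gfun u) with hAmap
  have hA0 : ∀ u v : H, ⟪Amap u, v⟫_ℂ = a v u := by
    intro u v
    rw [hAmap]
    exact InnerProductSpace.toDual_symm_apply
  have hA : ∀ u v : H, ⟪v, Amap u⟫_ℂ = a u v := by
    intro u v
    rw [← inner_conj_symm, hA0, ← ha_herm]
  have hAadd : ∀ u u' : H, Amap (u + u') = Amap u + Amap u' := by
    intro u u'
    apply ext_inner_left ℂ
    intro v
    rw [inner_add_right, hA, hA, hA, ha_add₁]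
  have hAsmul : ∀ (c : ℂ) (u : H), Amap (c • u) = c • Amap u := by
    intro c u
    apply ext_inner_left ℂ
    intro v
    rw [inner_smul_right, hA, hA, ha_smul₁]
  have hAbdd : ∀ u : H, ‖Amap u‖ ≤ M * ‖u‖ := by
    intro u
    rw [hAmap]
    simp only [LinearIsometryEquiv.norm_map]
    exact LinearMap.mkContinuous_norm_le _ (by positivity) _
  set A : H →L[ℂ] H := LinearMap.mkContinuous
    { toFun := Amap, map_add' := hAadd, map_smul' := hAsmul } M hAbdd with hAdef
  have hAa : ∀ u v : H, ⟪v, A u⟫_ℂ = a u v := hA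
  -- ## invertibility of `A`
  have hAlow : ∀ u : H, α * ‖u‖ ≤ ‖A u‖ := by
    intro u
    have h1 : α * ‖u‖ ^ 2 ≤ (a u u).re := ha_ell u
    have h2 : (a u u).re ≤ ‖a u u‖ := Complex.re_le_norm _
    have h3 : ‖a u u‖ = ‖⟪u, A u⟫_ℂ‖ := by rw [hAa]
    have h4 : ‖⟪u, A u⟫_ℂ‖ ≤ ‖u‖ * ‖A u‖ := norm_inner_le_norm _ _
    have h5 : α * ‖u‖ ^ 2 ≤ ‖u‖ * ‖A u‖ := by
      calc α * ‖u‖ ^ 2 ≤ (a u u).re := h1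
      _ ≤ ‖a u u‖ := h2
      _ = ‖⟪u, A u⟫_ℂ‖ := h3
      _ ≤ ‖u‖ * ‖A u‖ := h4
    rcases eq_or_lt_of_le (norm_nonneg u) with h | h
    · simp [← h]
    · nlinarith
  have hanti : AntilipschitzWith (⟨α⁻¹, by positivity⟩ : NNReal) A := by
    apply A.antilipschitz_of_bound
    intro x
    show ‖x‖ ≤ α⁻¹ * ‖A x‖
    rw [le_inv_mul_iff₀ hα]
    exact hAlow x
  have hker : LinearMap.ker (A : H →ₗ[ℂ] H) = ⊥ := by
    exact LinearMap.ker_eq_bot |>.mpr hanti.injective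
  have hclosed : IsClosed (LinearMap.range (A : H →ₗ[ℂ] H) : Set H) := by
    have h := hanti.isClosed_range A.uniformContinuous
    convert h using 1
    exact LinearMap.coe_range _
  have horth : (LinearMap.range (A : H →ₗ[ℂ] H))ᗮ = ⊥ := by
    rw [Submodule.eq_bot_iff]
    intro v hv
    rw [Submodule.mem_orthogonal] at hv
    have h1 : ⟪A v, v⟫_ℂ = 0 := hv (A v) (LinearMap.mem_range_self _ v)
    have h2 : ⟪v, A v⟫_ℂ = 0 := by
      rw [← inner_conj_symm, h1]; simp
    exact hdef v (by rw [← hAa v v, h2]; simp)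
  have hrange : LinearMap.range (A : H →ₗ[ℂ] H) = ⊤ := by
    have htop : (LinearMap.range (A : H →ₗ[ℂ] H)).topologicalClosure = ⊤ :=
      Submodule.topologicalClosure_eq_top_iff.mpr horth
    have hcl : (LinearMap.range (A : H →ₗ[ℂ] H)).topologicalClosure = LinearMap.range (A : H →ₗ[ℂ] H) :=
      SetLike.coe_injective (by
        simpa [Submodule.topologicalClosure_coe] using hclosed.closure_eq)
    rw [← hcl, htop]
  set Aeq : H ≃L[ℂ] H := ContinuousLinearEquiv.ofBijective A hker hrange with hAeq
  have hAeqA : ∀ u : H, Aeq u = A u := fun u => rfl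
  -- ## the compact operator `T = A⁻¹ C`
  set T : H →L[ℂ] H := (Aeq.symm : H →L[ℂ] H).comp C with hTdef
  have hAT : ∀ u : H, A (T u) = C u := by
    intro u
    have h : A (Aeq.symm (C u)) = Aeq (Aeq.symm (C u)) := (hAeqA _).symm
    rw [hTdef]
    simpa [ContinuousLinearMap.comp_apply] using h.trans (Aeq.apply_symm_apply (C u))
  have hT : ∀ u v : H, a (T u) v = ⟪v, C u⟫_ℂ := by
    intro u v
    rw [← hAa, hAT]
  have hTcomp : IsCompactOperator (T : H → H) := by
    have h := hC.continuous_comp (Aeq.symm : H →L[ℂ] H).continuous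
    simpa [hTdef, ContinuousLinearMap.coe_comp', Function.comp] using h
  -- ## reformulation of `b`
  have hbT : ∀ u v : H, b u v = a (u + T u) v := by
    intro u v
    rw [hb, ha_add₁, hT]
  -- ## `1 + T` is injective, hence bounded below (by compactness of `T`)
  have hinj : ∀ u : H, u + T u = 0 → u = 0 := by
    intro u hu
    apply hwp
    intro ψ
    rw [hbT, hu, ha_zero₁]
  have hbb : ∃ c : ℝ, 0 < c ∧ ∀ u : H, c * ‖u‖ ≤ ‖u + T u‖ := by
    by_contra hcon
    push_neg at hcon
    have hseq : ∀ n : ℕ, ∃ v : H, ‖v‖ = 1 ∧ ‖v + T v‖ < 1 / (n + 1 : ℝ) := by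
      intro n
      obtain ⟨u, hu⟩ := hcon (1 / (n + 1 : ℝ)) (by positivity)
      have hu0 : u ≠ 0 := by
        intro h
        rw [h] at hu
        simp at hu
      have hn : (0:ℝ) < ‖u‖ := norm_pos_iff.mpr hu0
      refine ⟨(‖u‖ : ℂ)⁻¹ • u, ?_, ?_⟩
      · rw [norm_smul]
        simp [hn.ne']
      · have hT' : (‖u‖ : ℂ)⁻¹ • u + T ((‖u‖ : ℂ)⁻¹ • u) = (‖u‖ : ℂ)⁻¹ • (u + T u) := by
          rw [map_smul, smul_add]
        rw [hT', norm_smul]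
        have hco : ‖((‖u‖ : ℂ))⁻¹‖ = ‖u‖⁻¹ := by
          simp
        rw [hco]
        calc ‖u‖⁻¹ * ‖u + T u‖ < ‖u‖⁻¹ * (1 / (n + 1 : ℝ) * ‖u‖) := by
              exact mul_lt_mul_of_pos_left hu (inv_pos.mpr hn)
        _ = 1 / (n + 1 : ℝ) := by field_simp
    choose v hv1 hv2 using hseq
    have hK : IsCompact (closure ((T : H → H) '' Metric.closedBall 0 1)) := by
      exact hTcomp.isCompact_closure_image_closedBall (𝕜₁ := ℂ) (f := (T : H →ₗ[ℂ] H)) 1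
    have hmem : ∀ n, T (v n) ∈ closure ((T : H → H) '' Metric.closedBall 0 1) := by
      intro n
      apply subset_closure
      exact ⟨v n, by simp [Metric.mem_closedBall, hv1 n], rfl⟩
    obtain ⟨w, hwK, σ, hσ, hσtend⟩ := hK.tendsto_subseq hmem
    have hzero : Filter.Tendsto (fun n => v n + T (v n)) Filter.atTop (nhds 0) := by
      rw [tendsto_iff_norm_sub_tendsto_zero]
      simp only [sub_zero]
      apply squeeze_zero (fun n => norm_nonneg _) (fun n => (hv2 n).le)
      exact tendsto_one_div_add_atTop_nhds_zero_nat
    have hzero' : Filter.Tendsto (fun k => v (σ k) + T (v (σ k))) Filter.atTop (nhds 0) :=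
      hzero.comp hσ.tendsto_atTop
    have hvtend : Filter.Tendsto (fun k => v (σ k)) Filter.atTop (nhds (-w)) := by
      have h := hzero'.sub hσtend
      simpa using h
    have hTv : Filter.Tendsto (fun k => v (σ k) + T (v (σ k))) Filter.atTop
        (nhds (-w + T (-w))) := by
      have h1 : Filter.Tendsto (fun k => T (v (σ k))) Filter.atTop (nhds (T (-w))) :=
        (T.continuous.tendsto _).comp hvtend
      exact hvtend.add h1
    have hw0 : -w + T (-w) = 0 := tendsto_nhds_unique hTv hzero'
    have hwnorm : ‖w‖ = 1 := by
      have h1 : Filter.Tendsto (fun k => ‖v (σ k)‖) Filter.atTop (nhds ‖-w‖) :=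
        (continuous_norm.tendsto _).comp hvtend
      have h2 : Filter.Tendsto (fun k => ‖v (σ k)‖) Filter.atTop (nhds 1) := by
        simp only [hv1]
        exact tendsto_const_nhds
      have h := tendsto_nhds_unique h1 h2
      simpa using h
    have hfin := hinj (-w) hw0
    rw [neg_eq_zero] at hfin
    rw [hfin] at hwnorm
    simp at hwnorm
  -- ## nondegeneracy on the subspaces
  have hXuniq : ∀ (ℓ : ℕ), ∀ d ∈ X ℓ, (∀ ψ ∈ X ℓ, a d ψ = 0) → d = 0 := by
    intro ℓ d hd h
    exact hdef d (by rw [h d hd]; simp)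
  -- ## the Galerkin projections
  have hGal : ∀ (ℓ : ℕ) (u : H), ∃ g : H, g ∈ X ℓ ∧ ∀ ψ ∈ X ℓ, a (u - g) ψ = 0 := by
    intro ℓ u
    haveI := hXfin ℓ
    haveI : CompleteSpace (X ℓ) := FiniteDimensional.complete ℂ _
    set P := Submodule.orthogonalProjectionOnto (X ℓ) with hP
    set S : X ℓ →ₗ[ℂ] X ℓ :=
      (P.toLinearMap.comp A.toLinearMap).comp (X ℓ).subtype with hS
    have hSinj : Function.Injective S := by
      rw [← LinearMap.ker_eq_bot, Submodule.eq_bot_iff]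
      intro w hw
      rw [LinearMap.mem_ker] at hw
      have hw' : P (A (w : H)) = 0 := hw
      rw [Submodule.orthogonalProjectionOnto_eq_zero_iff] at hw'
      rw [Submodule.mem_orthogonal] at hw'
      have h1 : ⟪(w : H), A (w : H)⟫_ℂ = 0 := hw' _ w.2
      have h2 : (w : H) = 0 := hdef _ (by rw [← hAa, h1]; simp)
      exact Subtype.ext h2
    have hSsurj : Function.Surjective S := (LinearMap.injective_iff_surjective).mp hSinj
    obtain ⟨w, hws⟩ := hSsurj (P (A u))
    refine ⟨(w : H), w.2, ?_⟩
    intro ψ hψ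
    have h1 : P (A (w : H)) = P (A u) := hws
    have h2 : P (A u - A (w : H)) = 0 := by
      rw [map_sub, h1, sub_self]
    rw [Submodule.orthogonalProjectionOnto_eq_zero_iff, Submodule.mem_orthogonal] at h2
    have h3 : ⟪ψ, A u - A (w : H)⟫_ℂ = 0 := h2 ψ hψ
    have h4 : A (u - (w : H)) = A u - A (w : H) := map_sub _ _ _
    rw [← hAa, h4]
    exact h3
  set G : ℕ → H → H := fun ℓ u => (hGal ℓ u).choose with hGdef
  have hG1 : ∀ ℓ u, G ℓ u ∈ X ℓ := fun ℓ u => (hGal ℓ u).choose_spec.1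
  have hG2 : ∀ ℓ u, ∀ ψ ∈ X ℓ, a (u - G ℓ u) ψ = 0 := fun ℓ u => (hGal ℓ u).choose_spec.2
  have hGuniq : ∀ ℓ u g, g ∈ X ℓ → (∀ ψ ∈ X ℓ, a (u - g) ψ = 0) → g = G ℓ u := by
    intro ℓ u g hg hgp
    have hd : g - G ℓ u ∈ X ℓ := Submodule.sub_mem _ hg (hG1 ℓ u)
    have h0 : g - G ℓ u = 0 := by
      apply hXuniq ℓ _ hd
      intro ψ hψ
      have h1 : g - G ℓ u = (u - G ℓ u) - (u - g) := by abel
      rw [h1, ha_sub₁, hG2 ℓ u ψ hψ, hgp ψ hψ, sub_zero]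
    exact sub_eq_zero.mp h0
  have hGsub : ∀ ℓ (u v : H), G ℓ (u - v) = G ℓ u - G ℓ v := by
    intro ℓ u v
    refine (hGuniq ℓ (u - v) _ (Submodule.sub_mem _ (hG1 ℓ u) (hG1 ℓ v)) ?_).symm
    intro ψ hψ
    have h1 : (u - v) - (G ℓ u - G ℓ v) = (u - G ℓ u) - (v - G ℓ v) := by abel
    rw [h1, ha_sub₁, hG2 ℓ u ψ hψ, hG2 ℓ v ψ hψ, sub_zero]
  have hGadd : ∀ ℓ (u v : H), G ℓ (u + v) = G ℓ u + G ℓ v := by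
    intro ℓ u v
    refine (hGuniq ℓ (u + v) _ (Submodule.add_mem _ (hG1 ℓ u) (hG1 ℓ v)) ?_).symm
    intro ψ hψ
    have h1 : (u + v) - (G ℓ u + G ℓ v) = (u - G ℓ u) + (v - G ℓ v) := by abel
    rw [h1, ha_add₁, hG2 ℓ u ψ hψ, hG2 ℓ v ψ hψ, add_zero]
  have hGsmul : ∀ ℓ (c : ℂ) (u : H), G ℓ (c • u) = c • G ℓ u := by
    intro ℓ c u
    refine (hGuniq ℓ (c • u) _ (Submodule.smul_mem _ c (hG1 ℓ u)) ?_).symm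
    intro ψ hψ
    have h1 : c • u - c • G ℓ u = c • (u - G ℓ u) := by rw [smul_sub]
    rw [h1, ha_smul₁, hG2 ℓ u ψ hψ, mul_zero]
  have hGid : ∀ ℓ (g : H), g ∈ X ℓ → G ℓ g = g := by
    intro ℓ g hg
    refine (hGuniq ℓ g g hg ?_).symm
    intro ψ hψ
    rw [sub_self, ha_zero₁]
  -- ## Céa / quasi-optimality
  have hCea : ∀ ℓ (u ψ : H), ψ ∈ X ℓ → ‖u - G ℓ u‖ ≤ (M / α) * ‖u - ψ‖ := by
    intro ℓ u ψ hψ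
    set d := u - G ℓ u with hd
    have h1 : α * ‖d‖ ^ 2 ≤ (a d d).re := ha_ell d
    have h2 : a d d = a d (u - ψ) := by
      have hx : u - ψ = d + (G ℓ u - ψ) := by rw [hd]; abel
      rw [hx, ha_add₂, hG2 ℓ u _ (Submodule.sub_mem _ (hG1 ℓ u) hψ), add_zero]
    have h3 : (a d (u - ψ)).re ≤ ‖a d (u - ψ)‖ := Complex.re_le_norm _
    have h4 : ‖a d (u - ψ)‖ ≤ M * ‖d‖ * ‖u - ψ‖ := ha_bdd _ _
    have h5 : α * ‖d‖ ^ 2 ≤ M * ‖d‖ * ‖u - ψ‖ := by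
      rw [h2] at h1
      linarith
    rcases eq_or_lt_of_le (norm_nonneg d) with h | h
    · rw [← h]
      positivity
    · rw [div_mul_eq_mul_div, le_div_iff₀ hα]
      nlinarith
  have hDbound : ∀ ℓ (u : H), ‖u - G ℓ u‖ ≤ (M / α) * ‖u‖ := by
    intro ℓ u
    have h := hCea ℓ u 0 (Submodule.zero_mem _)
    simpa using h
  have hG0 : ∀ ℓ, G ℓ 0 = 0 := fun ℓ => hGid ℓ 0 (Submodule.zero_mem _)
  -- ## pointwise convergence of the Galerkin projections
  have hDtend : ∀ u : H, Filter.Tendsto (fun ℓ => ‖u - G ℓ u‖) Filter.atTop (nhds 0) := by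
    intro u
    rw [Metric.tendsto_atTop]
    intro ε hε
    have hε' : 0 < ε * α / M / 2 := by positivity
    obtain ⟨N, hN⟩ := (Metric.tendsto_atTop.mp (hdense u)) (ε * α / M / 2) hε'
    refine ⟨N, fun ℓ hℓ => ?_⟩
    have h1 := hN ℓ hℓ
    rw [Real.dist_eq, sub_zero] at h1
    have h2 : Metric.infDist u (X ℓ : Set H) < ε * α / M / 2 :=
      lt_of_le_of_lt (le_abs_self _) h1
    have hne : ((X ℓ : Set H)).Nonempty := ⟨0, Submodule.zero_mem _⟩
    obtain ⟨ψ, hψm, hψd⟩ := (Metric.infDist_lt_iff hne).mp h2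
    have h3 : ‖u - G ℓ u‖ ≤ (M / α) * ‖u - ψ‖ := hCea ℓ u ψ hψm
    have h4 : ‖u - ψ‖ = dist u ψ := (dist_eq_norm u ψ).symm
    rw [Real.dist_eq, sub_zero]
    have h5 : ‖u - G ℓ u‖ < (M / α) * (ε * α / M / 2) := by
      apply lt_of_le_of_lt h3
      apply mul_lt_mul_of_pos_left _ (by positivity)
      rw [h4]; exact hψd
    have h6 : (M / α) * (ε * α / M / 2) = ε / 2 := by field_simp
    rw [abs_of_nonneg (norm_nonneg _)]
    rw [h6] at h5
    linarith
  -- ## uniform smallness of `(1 - G ℓ) ∘ T`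
  have hUnif : ∀ ε : ℝ, 0 < ε → ∃ ℓ₀ : ℕ, ∀ ℓ, ℓ₀ ≤ ℓ →
      ∀ u : H, ‖T u - G ℓ (T u)‖ ≤ ε * ‖u‖ := by
    intro ε hε
    set K := closure ((T : H → H) '' Metric.closedBall 0 1) with hKdef
    have hK : IsCompact K :=
      hTcomp.isCompact_closure_image_closedBall (𝕜₁ := ℂ) (f := (T : H →ₗ[ℂ] H)) 1
    set ε' : ℝ := ε / (2 * (1 + M / α)) with hε'def
    have hε' : 0 < ε' := by positivity
    obtain ⟨t, htfin, htcov⟩ := (Metric.totallyBounded_iff).mp hK.totallyBounded ε' hε'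
    have hev : ∀ᶠ ℓ in Filter.atTop, ∀ y ∈ t, ‖y - G ℓ y‖ ≤ ε' := by
      rw [Filter.eventually_all_finite htfin]
      intro y hy
      have h := (hDtend y).eventually (eventually_le_nhds hε')
      filter_upwards [h] with ℓ hh using hh
    obtain ⟨ℓ₀, hℓ₀⟩ := Filter.eventually_atTop.mp hev
    refine ⟨ℓ₀, fun ℓ hℓ u => ?_⟩
    have hcase : ∀ u : H, ‖u‖ ≤ 1 → ‖T u - G ℓ (T u)‖ ≤ ε / 2 := by
      intro u hu
      have hTuK : T u ∈ K := subset_closure ⟨u, by simpa [Metric.mem_closedBall] using hu, rfl⟩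
      obtain ⟨y, hyt, hyb⟩ := Set.mem_iUnion₂.mp (htcov hTuK)
      rw [Metric.mem_ball, dist_eq_norm] at hyb
      have hsplit : T u - G ℓ (T u) = ((T u - y) - G ℓ (T u - y)) + (y - G ℓ y) := by
        rw [hGsub]; abel
      calc ‖T u - G ℓ (T u)‖
          ≤ ‖(T u - y) - G ℓ (T u - y)‖ + ‖y - G ℓ y‖ := by rw [hsplit]; exact norm_add_le _ _
        _ ≤ (M / α) * ‖T u - y‖ + ε' := add_le_add (hDbound ℓ _) (hℓ₀ ℓ hℓ y hyt)
        _ ≤ (M / α) * ε' + ε' := by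
            have h := mul_le_mul_of_nonneg_left hyb.le (by positivity : (0:ℝ) ≤ M / α)
            linarith
        _ = (1 + M / α) * ε' := by ring
        _ = ε / 2 := by
            rw [hε'def]
            field_simp
    rcases eq_or_ne u 0 with rfl | hu0
    · simp [hG0 ℓ]
    · have hn : (0:ℝ) < ‖u‖ := norm_pos_iff.mpr hu0
      have h1 : ‖(‖u‖:ℂ)⁻¹ • u‖ ≤ 1 := by
        rw [norm_smul]
        simp [hn.ne']
      have h2 := hcase _ h1
      have h3 : T ((‖u‖:ℂ)⁻¹ • u) - G ℓ (T ((‖u‖:ℂ)⁻¹ • u)) =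
          (‖u‖:ℂ)⁻¹ • (T u - G ℓ (T u)) := by
        rw [map_smul, hGsmul, smul_sub]
      rw [h3, norm_smul] at h2
      have h4 : ‖((‖u‖:ℂ))⁻¹‖ = ‖u‖⁻¹ := by simp
      rw [h4] at h2
      have h5 : ‖T u - G ℓ (T u)‖ ≤ (ε / 2) * ‖u‖ := by
        rw [inv_mul_le_iff₀ hn] at h2
        linarith [h2]
      nlinarith [norm_nonneg (T u - G ℓ (T u)), hn]
  -- ## the Riesz representative of `f` with respect to `a`
  have hFex : ∃ F : H, ∀ v : H, a F v = f v := by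
    obtain ⟨Cf, hCf⟩ := hf_bdd
    set fbar : H →L[ℂ] ℂ := LinearMap.mkContinuous
      { toFun := fun v => conj (f v)
        map_add' := fun x y => by rw [hf_add]; simp
        map_smul' := fun m x => by
          rw [hf_smul]; simp } Cf
      (fun x => by simpa using hCf x) with hfb
    set w : H := (InnerProductSpace.toDual ℂ H).symm fbar with hw
    have hw1 : ∀ v : H, ⟪w, v⟫_ℂ = conj (f v) := by
      intro v
      rw [hw]
      exact InnerProductSpace.toDual_symm_apply
    have hw2 : ∀ v : H, ⟪v, w⟫_ℂ = f v := by
      intro v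
      rw [← inner_conj_symm, hw1]
      simp
    refine ⟨Aeq.symm w, fun v => ?_⟩
    rw [← hAa]
    have h : A (Aeq.symm w) = w := by
      rw [← hAeqA]
      exact Aeq.apply_symm_apply w
    rw [h, hw2]
  obtain ⟨F, hF⟩ := hFex
  -- ## choice of `ℓs` and the key stability bound
  obtain ⟨c, hc, hlow⟩ := hbb
  obtain ⟨ℓs, hℓs⟩ := hUnif (c / 2) (by positivity)
  have hkey : ∀ ℓ, ℓs ≤ ℓ → ∀ u : H, (c / 2) * ‖u‖ ≤ ‖u + G ℓ (T u)‖ := by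
    intro ℓ hℓ u
    have h1 := hlow u
    have h2 : u + T u = (u + G ℓ (T u)) + (T u - G ℓ (T u)) := by abel
    have h3 : ‖u + T u‖ ≤ ‖u + G ℓ (T u)‖ + ‖T u - G ℓ (T u)‖ := by
      rw [h2]; exact norm_add_le _ _
    have h4 := hℓs ℓ hℓ u
    linarith
  -- ## key identity on the subspaces
  have hiden : ∀ (ℓ : ℕ) (u : H), ∀ Ψ ∈ X ℓ,
      a (u + T u - F) Ψ = a (u + G ℓ (T u) - G ℓ F) Ψ := by
    intro ℓ u Ψ hΨ
    have hsplit : u + T u - F =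
        (u + G ℓ (T u) - G ℓ F) + ((T u - G ℓ (T u)) - (F - G ℓ F)) := by abel
    rw [hsplit, ha_add₁ (u + G ℓ (T u) - G ℓ F), ha_sub₁ (T u - G ℓ (T u)),
      hG2 ℓ (T u) Ψ hΨ, hG2 ℓ F Ψ hΨ]
    ring
  -- ## characterization of discrete solutions
  have hchar : ∀ (ℓ : ℕ) (Φ : H), Φ ∈ X ℓ →
      ((∀ Ψ ∈ X ℓ, b Φ Ψ = f Ψ) ↔ Φ + G ℓ (T Φ) = G ℓ F) := by
    intro ℓ Φ hΦ
    have hmem : Φ + G ℓ (T Φ) - G ℓ F ∈ X ℓ :=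
      Submodule.sub_mem _ (Submodule.add_mem _ hΦ (hG1 ℓ _)) (hG1 ℓ F)
    constructor
    · intro hsol
      have h0 : ∀ Ψ ∈ X ℓ, a (Φ + G ℓ (T Φ) - G ℓ F) Ψ = 0 := by
        intro Ψ hΨ
        rw [← hiden ℓ Φ Ψ hΨ, ha_sub₁]
        have h1 : a (Φ + T Φ) Ψ = f Ψ := by rw [← hbT]; exact hsol Ψ hΨ
        rw [h1, hF, sub_self]
      have h := hXuniq ℓ _ hmem h0
      rw [sub_eq_zero] at h
      exact h
    · intro heq
      intro Ψ hΨ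
      have h0 : a (Φ + T Φ - F) Ψ = 0 := by
        rw [hiden ℓ Φ Ψ hΨ, heq, sub_self, ha_zero₁]
      rw [ha_sub₁] at h0
      rw [hbT, ← hF Ψ]
      exact sub_eq_zero.mp h0
  refine ⟨ℓs, ?_, ?_⟩
  · -- ## existence and uniqueness
    intro ℓ hℓ
    haveI := hXfin ℓ
    set Smap : X ℓ →ₗ[ℂ] X ℓ :=
      { toFun := fun w => ⟨(w : H) + G ℓ (T w),
          Submodule.add_mem _ w.2 (hG1 ℓ _)⟩
        map_add' := by
          intro w w'
          apply Subtype.ext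
          push_cast
          rw [map_add, hGadd]
          abel
        map_smul' := by
          intro m w
          apply Subtype.ext
          push_cast
          rw [map_smul, hGsmul]
          simp [smul_add] } with hSmap
    have hSinj : Function.Injective Smap := by
      rw [← LinearMap.ker_eq_bot, Submodule.eq_bot_iff]
      intro w hw
      rw [LinearMap.mem_ker] at hw
      have h1 : (w : H) + G ℓ (T w) = 0 := congrArg Subtype.val hw
      have h2 := hkey ℓ hℓ (w : H)
      rw [h1, norm_zero] at h2
      have h3 : ‖(w : H)‖ = 0 := by nlinarith [norm_nonneg (w : H)]
      exact Subtype.ext (norm_eq_zero.mp h3)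
    have hSsurj : Function.Surjective Smap := LinearMap.injective_iff_surjective.mp hSinj
    obtain ⟨w, hw⟩ := hSsurj ⟨G ℓ F, hG1 ℓ F⟩
    have hweq : (w : H) + G ℓ (T w) = G ℓ F := congrArg Subtype.val hw
    refine ⟨(w : H), ⟨w.2, (hchar ℓ _ w.2).mpr hweq⟩, ?_⟩
    rintro y ⟨hy, hysol⟩
    have hyeq : y + G ℓ (T y) = G ℓ F := (hchar ℓ y hy).mp hysol
    have hdiff : (y - (w : H)) + G ℓ (T (y - (w : H))) = 0 := by
      rw [map_sub, hGsub]
      have h0 : (y + G ℓ (T y)) - ((w : H) + G ℓ (T (w : H))) = 0 := by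
        rw [hyeq, hweq, sub_self]
      calc y - (w : H) + (G ℓ (T y) - G ℓ (T (w : H)))
          = (y + G ℓ (T y)) - ((w : H) + G ℓ (T (w : H))) := by abel
        _ = 0 := h0
    have h2 := hkey ℓ hℓ (y - (w : H))
    rw [hdiff, norm_zero] at h2
    have h3 : ‖y - (w : H)‖ = 0 := by nlinarith [norm_nonneg (y - (w : H))]
    rw [← sub_eq_zero]
    exact norm_eq_zero.mp h3
  · -- ## convergence
    intro Φ hΦ
    have hbound : ∀ ℓ, ℓs ≤ ℓ → ‖φ - Φ ℓ‖ ≤ (2 / c) * ‖φ - G ℓ φ‖ := by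
      intro ℓ hℓ
      obtain ⟨hmem, hsol⟩ := hΦ ℓ hℓ
      set e := φ - Φ ℓ with he
      have horth' : ∀ Ψ ∈ X ℓ, a (e + T e) Ψ = 0 := by
        intro Ψ hΨ
        have h1 : e + T e = (φ + T φ) - (Φ ℓ + T (Φ ℓ)) := by
          rw [he, map_sub]; abel
        rw [h1, ha_sub₁, ← hbT, ← hbT, hφ Ψ, hsol Ψ hΨ, sub_self]
      have hzero : G ℓ e + G ℓ (T e) = 0 := by
        apply hXuniq ℓ _ (Submodule.add_mem _ (hG1 ℓ _) (hG1 ℓ _))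
        intro Ψ hΨ
        have h1 : G ℓ e + G ℓ (T e) = (e + T e) - ((e - G ℓ e) + (T e - G ℓ (T e))) := by
          abel
        rw [h1, ha_sub₁, horth' Ψ hΨ, ha_add₁, hG2 ℓ e Ψ hΨ, hG2 ℓ (T e) Ψ hΨ]
        ring
      have hGe : G ℓ e = G ℓ φ - Φ ℓ := by
        rw [he, hGsub, hGid ℓ (Φ ℓ) hmem]
      have h2 : e + G ℓ (T e) = φ - G ℓ φ := by
        have h3 : G ℓ (T e) = -(G ℓ e) := by
          linear_combination (norm := module) hzero
        rw [h3, hGe, he]; abel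
      have h4 := hkey ℓ hℓ e
      rw [h2] at h4
      have h5 : 0 ≤ ‖φ - G ℓ φ‖ := norm_nonneg _
      have h6 : c / 2 * ‖e‖ ≤ ‖φ - G ℓ φ‖ := h4
      rw [he] at h6
      have h7 : ‖φ - Φ ℓ‖ ≤ (2 / c) * ‖φ - G ℓ φ‖ := by
        rw [div_mul_eq_mul_div, le_div_iff₀ hc] at *
        nlinarith
      exact h7
    apply squeeze_zero' (Filter.Eventually.of_forall (fun ℓ => norm_nonneg _))
      (Filter.eventually_atTop.mpr ⟨ℓs, hbound⟩)
    have h := (hDtend φ).const_mul (2 / c)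
    simpa using h
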